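/- arXiv:2001.11700 — 2 statements merged into one kernel-verified Lean document; each statement's English description precedes it below -/
import Mathlib

section
/- Let s < n be positive integers and let S₁, S₂ be positive definite symmetric s×s matrices over ℤ. Then S₁ and S₂ are equivalent under GL(s,ℤ) (i.e. there exists U ∈ GL(s,ℤ) with UᵀS₁U = S₂) if and only if the n×n block matrices diag(S₁, 0) and diag(S₂, 0) (with zero blocks completing to size n) are equivalent under GL(n,ℤ). -/
open Matrix

/-- For positive integers `s < n` and positive definite symmetric
integer matrices `S₁ S₂` of size `s`, `S₁` and `S₂` are `GL(s,ℤ)`-equivalent iff the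
`n × n` block matrices `diag(S₁,0)` and `diag(S₂,0)` are `GL(n,ℤ)`-equivalent.
(The `n × n` matrices are indexed by `Fin s ⊕ Fin (n - s)`.) -/
theorem stmt_0 (s n : ℕ) (hs : 0 < s) (hsn : s < n)
    (S₁ S₂ : Matrix (Fin s) (Fin s) ℤ)
    (hS₁ : S₁.IsSymm) (hS₂ : S₂.IsSymm)
    (hp₁ : ∀ x : Fin s → ℤ, x ≠ 0 → 0 < x ⬝ᵥ S₁ *ᵥ x)
    (hp₂ : ∀ x : Fin s → ℤ, x ≠ 0 → 0 < x ⬝ᵥ S₂ *ᵥ x) :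
    (∃ U : Matrix (Fin s) (Fin s) ℤ, IsUnit U.det ∧ Uᵀ * S₁ * U = S₂) ↔
    (∃ V : Matrix (Fin s ⊕ Fin (n - s)) (Fin s ⊕ Fin (n - s)) ℤ, IsUnit V.det ∧
      Vᵀ * Matrix.fromBlocks S₁ 0 0 0 * V = Matrix.fromBlocks S₂ 0 0 0) := by
  constructor
  · rintro ⟨U, hU, hUe⟩
    refine ⟨Matrix.fromBlocks U 0 0 1, ?_, ?_⟩
    · simpa [Matrix.det_fromBlocks_zero₁₂] using hU
    · simp [Matrix.fromBlocks_transpose, Matrix.fromBlocks_multiply, hUe]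
  · rintro ⟨V, hV, hVe⟩
    set A := V.toBlocks₁₁ with hA
    set B := V.toBlocks₁₂ with hB
    set C := V.toBlocks₂₁ with hC
    set D := V.toBlocks₂₂ with hD
    have hVblocks : V = Matrix.fromBlocks A B C D := (Matrix.fromBlocks_toBlocks V).symm
    rw [hVblocks] at hVe hV
    rw [Matrix.fromBlocks_transpose, Matrix.fromBlocks_multiply,
      Matrix.fromBlocks_multiply] at hVe
    have h11 : Aᵀ * S₁ * A = S₂ := by
      have := congrArg Matrix.toBlocks₁₁ hVe
      simp [Matrix.toBlocks₁₁, Matrix.mul_assoc] at this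
      rw [Matrix.mul_assoc]
      exact this
    have h22 : Bᵀ * S₁ * B = 0 := by
      have := congrArg Matrix.toBlocks₂₂ hVe
      simp [Matrix.toBlocks₂₂, Matrix.mul_assoc] at this
      rw [Matrix.mul_assoc]
      exact this
    have hB0 : B = 0 := by
      ext i j
      by_contra hij
      have hcol : (fun i => B i j) ≠ 0 := by
        intro h
        exact hij (congrFun h i)
      have hpos := hp₁ _ hcol
      have hval : (fun i => B i j) ⬝ᵥ S₁ *ᵥ (fun i => B i j) = (Bᵀ * S₁ * B) j j := by
        simp only [Matrix.mul_apply, Matrix.mulVec, dotProduct, Finset.mul_sum,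
          Matrix.transpose_apply, Finset.sum_mul]
        rw [Finset.sum_comm]
        exact Finset.sum_congr rfl fun a _ => Finset.sum_congr rfl fun b _ => by ring
      rw [hval, h22] at hpos
      simp at hpos
    rw [hB0] at hVblocks hV
    have hdet : (Matrix.fromBlocks A (0 : Matrix (Fin s) (Fin (n-s)) ℤ) C D).det
        = A.det * D.det := Matrix.det_fromBlocks_zero₁₂ A C D
    rw [hdet] at hV
    exact ⟨A, isUnit_of_mul_isUnit_left hV, h11⟩
end

section
/- Let S be a symmetric positive definite (n−1)×(n−1) half-integral matrix with content c(S), let r ∈ ℕ, μ ∈ ℤ^{n−1}, and L ∈ ℤ^{n−1}. Then gcd(r, gcd(μ), c(S)) = gcd(r + Lᵀμ + S[L], gcd(μ + 2SL), c(S)), where S[L] = LᵀSL and gcd(v) of a vector means the gcd of its entries. -/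
open Matrix

/-- A symmetric rational matrix is half-integral if its diagonal entries are
integers and its doubled off-diagonal entries are integers. -/
def IsHalfIntegral {n : ℕ} (T : Matrix (Fin n) (Fin n) ℚ) : Prop :=
  T.IsSymm ∧ (∀ i, (T i i).den = 1) ∧ (∀ i j, ((2 : ℚ) * T i j).den = 1)

/-- The content of a half-integral matrix: the gcd of all diagonal entries and
all doubled off-diagonal entries (read off via numerators). -/
def content {n : ℕ} (T : Matrix (Fin n) (Fin n) ℚ) : ℤ :=
  Finset.gcd Finset.univ fun p : Fin n × Fin n =>
    if p.1 = p.2 then (T p.1 p.1).num else ((2 : ℚ) * T p.1 p.2).num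



open Finset in
lemma sum_split {m : ℕ} (g : Fin m → Fin m → ℚ) (hsymm : ∀ i j, g j i = g i j) :
    ∑ i, ∑ j, g i j = (∑ i, g i i) +
      2 * ∑ p ∈ Finset.univ.filter (fun p : Fin m × Fin m => p.1 < p.2), g p.1 p.2 := by
  classical
  have h0 : ∑ i, ∑ j, g i j = ∑ p : Fin m × Fin m, g p.1 p.2 :=
    (Fintype.sum_prod_type (fun p : Fin m × Fin m => g p.1 p.2)).symm
  rw [h0]
  rw [← Finset.sum_filter_add_sum_filter_not Finset.univ
    (fun p : Fin m × Fin m => p.1 = p.2) (fun p => g p.1 p.2)]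
  congr 1
  · rw [Finset.sum_filter, Fintype.sum_prod_type]
    simp
  · have hset : Finset.univ.filter (fun p : Fin m × Fin m => ¬ p.1 = p.2)
        = (Finset.univ.filter fun p : Fin m × Fin m => p.1 < p.2)
          ∪ (Finset.univ.filter fun p : Fin m × Fin m => p.2 < p.1) := by
      rw [← Finset.filter_or]
      apply Finset.filter_congr
      intro p _
      constructor
      · intro h; exact lt_or_gt_of_ne h
      · rintro (h | h) <;> [exact ne_of_lt h; exact (ne_of_lt h).symm]
    have hdisj : Disjoint (Finset.univ.filter fun p : Fin m × Fin m => p.1 < p.2)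
        (Finset.univ.filter fun p : Fin m × Fin m => p.2 < p.1) := by
      rw [Finset.disjoint_filter]
      intro p _ h1 h2
      exact absurd h1 (not_lt_of_gt h2)
    rw [hset, Finset.sum_union hdisj, two_mul]
    congr 1
    apply Finset.sum_bij' (fun (p : Fin m × Fin m) _ => (p.2, p.1))
      (fun (p : Fin m × Fin m) _ => (p.2, p.1))
    · intro p hp; simp at hp ⊢; exact hp
    · intro p hp; simp at hp ⊢; exact hp
    · intro p hp; simp
    · intro p hp; simp
    · intro p hp; exact hsymm p.2 p.1

open Finset in
lemma content_dvd_diag {m : ℕ} (S : Matrix (Fin m) (Fin m) ℚ) (i : Fin m) :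
    content S ∣ (S i i).num := by
  have := Finset.gcd_dvd (Finset.mem_univ ((i, i) : Fin m × Fin m))
    (f := fun p : Fin m × Fin m =>
      if p.1 = p.2 then (S p.1 p.1).num else ((2 : ℚ) * S p.1 p.2).num)
  simpa [content] using this

lemma content_dvd_two {m : ℕ} (S : Matrix (Fin m) (Fin m) ℚ)
    (hS : IsHalfIntegral S) (i j : Fin m) :
    content S ∣ ((2 : ℚ) * S i j).num := by
  by_cases h : i = j
  · subst h
    have h2 : ((2 : ℚ) * S i i).num = 2 * (S i i).num := by
      have : (((2 : ℚ) * S i i).num : ℚ) = ((2 * (S i i).num : ℤ) : ℚ) := by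
        rw [Rat.coe_int_num_of_den_eq_one (hS.2.2 i i)]
        push_cast
        rw [Rat.coe_int_num_of_den_eq_one (hS.2.1 i)]
      exact_mod_cast this
    rw [h2]
    exact (content_dvd_diag S i).mul_left 2
  · have := Finset.gcd_dvd (Finset.mem_univ ((i, j) : Fin m × Fin m))
      (f := fun p : Fin m × Fin m =>
        if p.1 = p.2 then (S p.1 p.1).num else ((2 : ℚ) * S p.1 p.2).num)
    simpa [h, content] using this

lemma aux_dvd (m : ℕ) (S : Matrix (Fin m) (Fin m) ℚ) (hS : IsHalfIntegral S)
    (r : ℤ) (μ L : Fin m → ℤ)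
    (sL : ℤ) (hsL : (sL : ℚ) = (fun i => (L i : ℚ)) ⬝ᵥ S *ᵥ (fun i => (L i : ℚ)))
    (v : Fin m → ℤ) (hv : ∀ i, (v i : ℚ) = 2 * (S *ᵥ (fun j => (L j : ℚ))) i) :
    gcd r (gcd (Finset.gcd Finset.univ μ) (content S)) ∣
      gcd (r + (∑ i, L i * μ i) + sL)
        (gcd (Finset.gcd Finset.univ fun i => μ i + v i) (content S)) := by
  set d := gcd r (gcd (Finset.gcd Finset.univ μ) (content S)) with hd
  have hdr : d ∣ r := gcd_dvd_left _ _
  have hdc : d ∣ content S := dvd_trans (gcd_dvd_right _ _) (gcd_dvd_right _ _)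
  have hdμ : ∀ i, d ∣ μ i := fun i =>
    dvd_trans (dvd_trans (gcd_dvd_right _ _) (gcd_dvd_left _ _))
      (Finset.gcd_dvd (Finset.mem_univ i))
  -- v i = ∑ j, b i j * L j
  have hvb : ∀ i, v i = ∑ j, ((2 : ℚ) * S i j).num * L j := by
    intro i
    have : ((∑ j, ((2 : ℚ) * S i j).num * L j : ℤ) : ℚ) = (v i : ℚ) := by
      push_cast
      rw [hv i]
      simp only [Matrix.mulVec, dotProduct]
      rw [Finset.mul_sum]
      refine Finset.sum_congr rfl fun j _ => ?_
      rw [Rat.coe_int_num_of_den_eq_one (hS.2.2 i j)]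
      ring
    exact_mod_cast this.symm
  have hdv : ∀ i, d ∣ v i := by
    intro i
    rw [hvb i]
    exact Finset.dvd_sum fun j _ =>
      (dvd_trans hdc (content_dvd_two S hS i j)).mul_right _
  -- sL decomposition
  have hsLb : sL = (∑ i, (S i i).num * (L i * L i)) +
      ∑ p ∈ Finset.univ.filter (fun p : Fin m × Fin m => p.1 < p.2),
        ((2 : ℚ) * S p.1 p.2).num * (L p.1 * L p.2) := by
    have key : ((∑ i, (S i i).num * (L i * L i) : ℤ) : ℚ) +
        ((∑ p ∈ Finset.univ.filter (fun p : Fin m × Fin m => p.1 < p.2),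
          ((2 : ℚ) * S p.1 p.2).num * (L p.1 * L p.2) : ℤ) : ℚ) = (sL : ℚ) := by
      rw [hsL]
      simp only [dotProduct, Matrix.mulVec]
      have expand : ∀ i : Fin m, (L i : ℚ) * ((fun k => S i k) ⬝ᵥ fun j => (L j : ℚ))
          = ∑ j, (L i : ℚ) * S i j * (L j : ℚ) := by
        intro i
        simp only [dotProduct]
        rw [Finset.mul_sum]
        exact Finset.sum_congr rfl fun j _ => by ring
      calc ((∑ i, (S i i).num * (L i * L i) : ℤ) : ℚ) +
            ((∑ p ∈ Finset.univ.filter (fun p : Fin m × Fin m => p.1 < p.2),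
              ((2 : ℚ) * S p.1 p.2).num * (L p.1 * L p.2) : ℤ) : ℚ)
          = (∑ i, (L i : ℚ) * S i i * (L i : ℚ)) +
            2 * ∑ p ∈ Finset.univ.filter (fun p : Fin m × Fin m => p.1 < p.2),
              (L p.1 : ℚ) * S p.1 p.2 * (L p.2 : ℚ) := by
            push_cast
            rw [Finset.mul_sum]
            congr 1
            · exact Finset.sum_congr rfl fun i _ => by
                rw [Rat.coe_int_num_of_den_eq_one (hS.2.1 i)]; ring
            · exact Finset.sum_congr rfl fun p _ => by
                rw [Rat.coe_int_num_of_den_eq_one (hS.2.2 p.1 p.2)]; ring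
        _ = ∑ i, ∑ j, (L i : ℚ) * S i j * (L j : ℚ) := by
            rw [sum_split (fun i j => (L i : ℚ) * S i j * (L j : ℚ))
              (fun i j => by rw [hS.1.apply]; ring)]
        _ = ∑ i, (L i : ℚ) * ((fun k => S i k) ⬝ᵥ fun j => (L j : ℚ)) := by
            exact Finset.sum_congr rfl fun i _ => (expand i).symm
    exact_mod_cast key.symm
  have hdsL : d ∣ sL := by
    rw [hsLb]
    refine dvd_add (Finset.dvd_sum fun i _ => ?_) (Finset.dvd_sum fun p _ => ?_)
    · exact (dvd_trans hdc (content_dvd_diag S i)).mul_right _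
    · exact (dvd_trans hdc (content_dvd_two S hS p.1 p.2)).mul_right _
  refine dvd_gcd ?_ (dvd_gcd (Finset.dvd_gcd fun i _ => dvd_add (hdμ i) (hdv i)) hdc)
  exact dvd_add (dvd_add hdr (Finset.dvd_sum fun i _ => (hdμ i).mul_left _)) hdsL

/-- Invariance of `gcd(r, gcd(μ), c(S))` under the Jacobi index shift
`(r, μ) ↦ (r + Lᵀμ + S[L], μ + 2SL)`, for `S` positive definite half-integral.
Here `sL` is the integer equal to `S[L] = LᵀSL` and `v` the integer vector equal to
`2SL`. -/
theorem stmt_14 (m : ℕ) (S : Matrix (Fin m) (Fin m) ℚ) (hS : IsHalfIntegral S)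
    (hpos : ∀ x : Fin m → ℚ, x ≠ 0 → 0 < x ⬝ᵥ S *ᵥ x)
    (r : ℕ) (μ L : Fin m → ℤ)
    (sL : ℤ) (hsL : (sL : ℚ) = (fun i => (L i : ℚ)) ⬝ᵥ S *ᵥ (fun i => (L i : ℚ)))
    (v : Fin m → ℤ) (hv : ∀ i, (v i : ℚ) = 2 * (S *ᵥ (fun j => (L j : ℚ))) i) :
    gcd (r : ℤ) (gcd (Finset.gcd Finset.univ μ) (content S)) =
      gcd ((r : ℤ) + (∑ i, L i * μ i) + sL)
        (gcd (Finset.gcd Finset.univ fun i => μ i + v i) (content S)) := by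
  have h1 := aux_dvd m S hS (r : ℤ) μ L sL hsL v hv
  have hLQ : (fun i => (((fun i => -L i) i : ℤ) : ℚ)) = fun i => -((L i : ℚ)) := by
    funext i; push_cast; ring
  have hsL' : (sL : ℚ) = (fun i => (((fun i => -L i) i : ℤ) : ℚ)) ⬝ᵥ S *ᵥ
      (fun i => (((fun i => -L i) i : ℤ) : ℚ)) := by
    rw [hLQ]
    show (sL : ℚ) = (-(fun i => (L i : ℚ))) ⬝ᵥ S *ᵥ (-(fun i => (L i : ℚ)))
    rw [Matrix.mulVec_neg, dotProduct_neg, neg_dotProduct, neg_neg]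
    exact hsL
  have hv' : ∀ i, (((fun i => -v i) i : ℤ) : ℚ) =
      2 * (S *ᵥ (fun j => (((fun i => -L i) j : ℤ) : ℚ))) i := by
    intro i
    rw [hLQ]
    show ((-v i : ℤ) : ℚ) = 2 * ((S *ᵥ (-(fun j => (L j : ℚ)))) i)
    rw [Matrix.mulVec_neg, Pi.neg_apply, mul_neg, ← hv i]
    push_cast
    ring
  have h2 := aux_dvd m S hS ((r : ℤ) + (∑ i, L i * μ i) + sL)
    (fun i => μ i + v i) (fun i => -L i) sL hsL' (fun i => -v i) hv'
  have hLv : ∑ i, L i * v i = 2 * sL := by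
    have : ((∑ i, L i * v i : ℤ) : ℚ) = ((2 * sL : ℤ) : ℚ) := by
      push_cast
      rw [hsL]
      simp only [dotProduct]
      rw [Finset.mul_sum]
      refine Finset.sum_congr rfl fun i _ => ?_
      rw [hv i]
      ring
    exact_mod_cast this
  have e1 : (r : ℤ) + (∑ i, L i * μ i) + sL + (∑ i, -L i * (μ i + v i)) + sL
      = (r : ℤ) := by
    have hsplit : ∑ i, -L i * (μ i + v i)
        = -(∑ i, L i * μ i) + -(∑ i, L i * v i) := by
      rw [← Finset.sum_neg_distrib, ← Finset.sum_neg_distrib,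
        ← Finset.sum_add_distrib]
      exact Finset.sum_congr rfl fun i _ => by ring
    rw [hsplit, hLv]
    ring
  have e2 : (fun i => μ i + v i + -v i) = μ := by funext i; ring
  rw [e1, e2] at h2
  refine Int.dvd_antisymm ?_ ?_ h1 h2
  · rw [← Int.coe_gcd]; exact Int.natCast_nonneg _
  · rw [← Int.coe_gcd]; exact Int.natCast_nonneg _
end
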